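/- Let q = p^n = Mf + 1 be a prime power with M ≥ 2 and f ≥ 1, let α be a primitive element of F_q, and let C_r = {α^{Ml+r} : 0 ≤ l ≤ f−1}, 0 ≤ r ≤ M−1, be the cyclotomic classes of order M. For 0 ≤ i ≤ M−1 define X_i : Z_{q−1} → Z_M by X_i(t) = r + i (mod M) if α^t + 1 ∈ C_r, and X_i(t) = i if α^t + 1 = 0. Then the (q−1, M, M)-FHS set U = {X_0, …, X_{M−1}} has optimal AHC, i.e., A_a(U)/((q−1)(M−1)) + A_c(U)/(q−2) = ((q−1)M − M)/(M(q−2)(M−1)), and its maximum Hamming correlation satisfies H(U) ≤ f + 2, where H(U) is the maximum of all out-of-phase Hamming autocorrelation values H_{X_i}(τ) (1 ≤ τ ≤ q−2) and all Hamming crosscorrelation values H_{X_i,X_j}(τ) (i ≠ j, 0 ≤ τ ≤ q−2). -/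

import Mathlib

open Finset

/-- Periodic Hamming correlation of two FHSs `X, Y : ZMod N → F` at shift `τ`. -/
def Hcorr {N : ℕ} [NeZero N] {F : Type*} [DecidableEq F]
    (X Y : ZMod N → F) (τ : ZMod N) : ℕ :=
  (Finset.univ.filter (fun t => X t = Y (t + τ))).card

/-- `N_X(a)`: number of occurrences of frequency `a` in the FHS `X`. -/
def countFreq {N : ℕ} [NeZero N] {F : Type*} [DecidableEq F]
    (X : ZMod N → F) (a : F) : ℕ :=
  (Finset.univ.filter (fun t => X t = a)).card

/-- `N_U(a)`: total number of occurrences of `a` in the FHS set `U`. -/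
def countFreqSet {N L : ℕ} [NeZero N] {F : Type*} [DecidableEq F]
    (U : Fin L → ZMod N → F) (a : F) : ℕ :=
  ∑ i : Fin L, countFreq (U i) a

/-- `S_a(U)`: sum of all out-of-phase Hamming autocorrelation values. -/
def Sa {N L : ℕ} [NeZero N] {F : Type*} [DecidableEq F]
    (U : Fin L → ZMod N → F) : ℕ :=
  ∑ i : Fin L, ∑ τ ∈ Finset.univ \ {(0 : ZMod N)}, Hcorr (U i) (U i) τ

/-- `S_c(U)`: sum of all Hamming crosscorrelation values (ordered pairs `i ≠ j`). -/
def Sc {N L : ℕ} [NeZero N] {F : Type*} [DecidableEq F]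
    (U : Fin L → ZMod N → F) : ℕ :=
  ∑ i : Fin L, ∑ j ∈ Finset.univ \ {i}, ∑ τ : ZMod N, Hcorr (U i) (U j) τ

/-- Average Hamming autocorrelation `A_a(U) = S_a(U)/(L(N-1))`. -/
def Aa {N L : ℕ} [NeZero N] {F : Type*} [DecidableEq F]
    (U : Fin L → ZMod N → F) : ℚ :=
  (Sa U : ℚ) / ((L : ℚ) * ((N : ℚ) - 1))

/-- Average Hamming crosscorrelation `A_c(U) = S_c(U)/(L(L-1)N)`. -/
def Ac {N L : ℕ} [NeZero N] {F : Type*} [DecidableEq F]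
    (U : Fin L → ZMod N → F) : ℚ :=
  (Sc U : ℚ) / ((L : ℚ) * ((L : ℚ) - 1) * (N : ℚ))

/-- `H_a(U)`: maximum out-of-phase Hamming autocorrelation of the set `U`. -/
def Ha {N L : ℕ} [NeZero N] {F : Type*} [DecidableEq F]
    (U : Fin L → ZMod N → F) : ℕ :=
  Finset.univ.sup fun i => (Finset.univ \ {(0 : ZMod N)}).sup fun τ => Hcorr (U i) (U i) τ

/-- `H_c(U)`: maximum Hamming crosscorrelation of the set `U`. -/
def Hc {N L : ℕ} [NeZero N] {F : Type*} [DecidableEq F]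
    (U : Fin L → ZMod N → F) : ℕ :=
  Finset.univ.sup fun i => (Finset.univ \ {i}).sup fun j =>
    Finset.univ.sup fun τ => Hcorr (U i) (U j) τ

/-- `U` has optimal average Hamming correlation (meets the Peng et al. AHC bound with equality). -/
def optimalAHC {N L : ℕ} [NeZero N] {F : Type*} [Fintype F] [DecidableEq F]
    (U : Fin L → ZMod N → F) : Prop :=
  Aa U / ((N : ℚ) * ((L : ℚ) - 1)) + Ac U / ((N : ℚ) - 1)
    = ((N : ℚ) * L - Fintype.card F) /
      ((Fintype.card F : ℚ) * ((N : ℚ) - 1) * ((L : ℚ) - 1))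

/-- The cyclotomic class `C_r = {α^(Ml+r) : 0 ≤ l ≤ f-1}`. -/
def cycClass {F : Type*} [Monoid F] [DecidableEq F] (α : F) (M f r : ℕ) : Finset F :=
  (Finset.range f).image fun l => α ^ (M * l + r)

/-- The cyclotomic number `(i,j)_M = |(C_i + 1) ∩ C_j|`. -/
def cycNum {F : Type*} [Field F] [DecidableEq F] (α : F) (M f i j : ℕ) : ℕ :=
  (((cycClass α M f i).image fun x => x + 1) ∩ cycClass α M f j).card


section Aux
variable {N M f : ℕ} [NeZero N] {F : Type*} [Field F] [Fintype F] [DecidableEq F]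

/-- Bundle of hypotheses for Construction B. -/
structure CBSetup (N M f : ℕ) [NeZero N] {F : Type*} [Field F]
    (α : F) (dlog : F → ZMod N) : Prop where
  hα0 : α ≠ 0
  hαN : α ^ N = 1
  einj : ∀ s t : ZMod N, α ^ s.val = α ^ t.val → s = t
  hdlog : ∀ x : F, x ≠ 0 → α ^ (dlog x).val = x
  hN : N = M * f
  hM : 2 ≤ M
  hf : 1 ≤ f

variable {α : F} {dlog : F → ZMod N}

lemma CBSetup.pow_val_add (S : CBSetup N M f α dlog) (a b : ZMod N) :
    α ^ (a + b).val = α ^ a.val * α ^ b.val := by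
  rw [ZMod.val_add, ← pow_add, ← pow_eq_pow_mod _ S.hαN]

/-- discrete-log-mod-M class map -/
def clF (M : ℕ) (dlog : F → ZMod N) (x : F) : ZMod M := ((dlog x).val : ZMod M)

lemma CBSetup.dlog_pow (S : CBSetup N M f α dlog) (k : ℕ) :
    dlog (α ^ k) = (k : ZMod N) := by
  apply S.einj
  rw [S.hdlog _ (pow_ne_zero _ S.hα0), ZMod.val_natCast, ← pow_eq_pow_mod _ S.hαN]

lemma CBSetup.clF_pow (S : CBSetup N M f α dlog) (k : ℕ) :
    clF M dlog (α ^ k) = (k : ZMod M) := by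
  rw [clF, S.dlog_pow, ZMod.val_natCast]
  conv_rhs => rw [← Nat.div_add_mod k N]
  push_cast
  rw [(ZMod.natCast_eq_zero_iff N M).2 ⟨f, S.hN⟩]
  ring

lemma CBSetup.clF_mul (S : CBSetup N M f α dlog) {x y : F} (hx : x ≠ 0) (hy : y ≠ 0) :
    clF M dlog (x * y) = clF M dlog x + clF M dlog y := by
  have hx' := S.hdlog x hx
  have hy' := S.hdlog y hy
  calc clF M dlog (x * y) = clF M dlog (α ^ ((dlog x).val + (dlog y).val)) := by
        rw [pow_add, hx', hy']
    _ = (((dlog x).val : ZMod M)) + (((dlog y).val : ZMod M)) := by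
        rw [S.clF_pow]; push_cast; ring
    _ = _ := rfl

lemma CBSetup.clF_one (S : CBSetup N M f α dlog) : clF M dlog 1 = 0 := by
  have := S.clF_pow 0
  simpa using this

lemma CBSetup.clF_inv (S : CBSetup N M f α dlog) {x : F} (hx : x ≠ 0) :
    clF M dlog x⁻¹ = - clF M dlog x := by
  have h := S.clF_mul hx (inv_ne_zero hx)
  rw [mul_inv_cancel₀ hx, S.clF_one] at h
  exact eq_neg_of_add_eq_zero_right h.symm

lemma CBSetup.mem_cycClass (S : CBSetup N M f α dlog) {x : F} {r : ℕ} (hr : r < M) :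
    x ∈ cycClass α M f r ↔ x ≠ 0 ∧ clF M dlog x = (r : ZMod M) := by
  haveI : NeZero M := ⟨by omega⟩
  constructor
  · rintro hx
    obtain ⟨l, hl, rfl⟩ := Finset.mem_image.1 hx
    refine ⟨pow_ne_zero _ S.hα0, ?_⟩
    rw [S.clF_pow]
    push_cast
    simp
  · rintro ⟨hx0, hcl⟩
    obtain ⟨d, hd, hdlt⟩ : ∃ d : ℕ, α ^ d = x ∧ d < N :=
      ⟨(dlog x).val, S.hdlog x hx0, ZMod.val_lt _⟩
    have hcl' : (d : ZMod M) = (r : ZMod M) := by rw [← hcl, ← hd, S.clF_pow]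
    have h2 := (ZMod.natCast_eq_natCast_iff d r M).1 hcl'
    unfold Nat.ModEq at h2
    rw [Nat.mod_eq_of_lt hr] at h2
    refine Finset.mem_image.2 ⟨d / M, Finset.mem_range.2 ?_, ?_⟩
    · have hMpos : 0 < M := by omega
      rw [Nat.div_lt_iff_lt_mul hMpos]
      rw [S.hN, Nat.mul_comm] at hdlt
      exact hdlt
    · rw [← h2, Nat.div_add_mod d M]
      exact hd

lemma CBSetup.card_cast_fiber (S : CBSetup N M f α dlog) (b : ZMod M) :
    (univ.filter fun t : ZMod N => ((t.val : ℕ) : ZMod M) = b).card = f := by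
  haveI : NeZero M := ⟨by have := S.hM; omega⟩
  have hMpos : 0 < M := by have := S.hM; omega
  rw [← Finset.card_range f]
  apply Finset.card_nbij' (fun t => t.val / M) (fun l => ((M * l + b.val : ℕ) : ZMod N))
  · intro t ht
    simp only [Finset.mem_coe, Finset.mem_filter, Finset.mem_univ, true_and] at ht
    have hlt : t.val < f * M := by
      rw [Nat.mul_comm, ← S.hN]; exact ZMod.val_lt t
    exact Finset.mem_range.2 ((Nat.div_lt_iff_lt_mul hMpos).2 hlt)
  · intro l hl
    simp only [Finset.mem_coe, Finset.mem_range] at hl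
    simp only [Finset.mem_coe, Finset.mem_filter, Finset.mem_univ, true_and]
    have hlt : M * l + b.val < N := by
      have hb := ZMod.val_lt b
      have h1 : M * (l + 1) = M * l + M := Nat.mul_succ M l
      have h2 : M * (l + 1) ≤ M * f := Nat.mul_le_mul_left M (by omega)
      rw [S.hN]; omega
    rw [ZMod.val_cast_of_lt hlt]
    push_cast
    simp [ZMod.natCast_self, ZMod.natCast_val, ZMod.cast_id]
  · intro t ht
    simp only [Finset.mem_coe, Finset.mem_filter, Finset.mem_univ, true_and] at ht
    have hmod : t.val % M = b.val := by
      have : ((t.val : ℕ) : ZMod M) = ((b.val : ℕ) : ZMod M) := by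
        rw [ht]; simp [ZMod.natCast_val, ZMod.cast_id]
      have h2 := (ZMod.natCast_eq_natCast_iff _ _ _).1 this
      unfold Nat.ModEq at h2
      rwa [Nat.mod_eq_of_lt (ZMod.val_lt b)] at h2
    beta_reduce
    rw [← hmod, Nat.div_add_mod]
    simp [ZMod.natCast_val, ZMod.cast_id]
  · intro l hl
    simp only [Finset.mem_coe, Finset.mem_range] at hl
    have hlt : M * l + b.val < N := by
      have hb := ZMod.val_lt b
      have h1 : M * (l + 1) = M * l + M := Nat.mul_succ M l
      have h2 : M * (l + 1) ≤ M * f := Nat.mul_le_mul_left M (by omega)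
      rw [S.hN]; omega
    beta_reduce
    rw [ZMod.val_cast_of_lt hlt]
    rw [Nat.mul_add_div hMpos]
    rw [Nat.div_eq_of_lt (ZMod.val_lt b)]
    omega

/-- transfer a count over `ZMod N` (via `t ↦ α ^ t.val`) to a count over nonzero field elements -/
lemma CBSetup.card_exp_fiber (S : CBSetup N M f α dlog) (P : F → Prop) [DecidablePred P] :
    (univ.filter fun t : ZMod N => P (α ^ t.val)).card
      = (univ.filter fun x : F => x ≠ 0 ∧ P x).card := by
  apply Finset.card_nbij (fun t => α ^ t.val)
  · intro t ht
    simp only [Finset.mem_coe, Finset.mem_filter, Finset.mem_univ, true_and] at ht ⊢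
    exact ⟨pow_ne_zero _ S.hα0, ht⟩
  · intro s hs t ht hst
    exact S.einj s t hst
  · intro x hx
    simp only [Finset.coe_filter, Set.mem_setOf_eq, Finset.mem_univ, true_and] at hx
    refine ⟨dlog x, ?_, S.hdlog x hx.1⟩
    simp only [Finset.coe_filter, Set.mem_setOf_eq, Finset.mem_univ, true_and]
    rw [S.hdlog x hx.1]
    exact hx.2

lemma CBSetup.card_clF_fiber (S : CBSetup N M f α dlog) (b : ZMod M) :
    (univ.filter fun y : F => y ≠ 0 ∧ clF M dlog y = b).card = f := by
  rw [← S.card_exp_fiber (fun y => clF M dlog y = b)]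
  rw [← S.card_cast_fiber b]
  congr 1
  apply Finset.filter_congr
  intro t _
  rw [S.clF_pow]


/-- the base hop function: x ↦ class of (x+1), with 0 at the pole -/
def psiF (M : ℕ) (dlog : F → ZMod N) (x : F) : ZMod M :=
  if x + 1 = 0 then 0 else clF M dlog (x + 1)

lemma CBSetup.card_psi_fiber (S : CBSetup N M f α dlog) (b : ZMod M) :
    (univ.filter fun x : F => x ≠ 0 ∧ psiF M dlog x = b).card = f := by
  rw [← S.card_clF_fiber b]
  apply Finset.card_nbij' (fun x => if x = -1 then 1 else x + 1)
      (fun y => if y = 1 then -1 else y - 1)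
  · intro x hx
    simp only [Finset.mem_coe, Finset.mem_filter, Finset.mem_univ, true_and] at hx
    simp only [Finset.mem_coe, Finset.mem_filter, Finset.mem_univ, true_and]
    by_cases h : x = -1
    · subst h
      rw [if_pos rfl]
      have hb : b = 0 := by
        rw [psiF, if_pos (by ring : (-1 : F) + 1 = 0)] at hx
        exact hx.2.symm
      exact ⟨one_ne_zero, by rw [S.clF_one, hb]⟩
    · have hx1 : x + 1 ≠ 0 := fun hc => h (by linear_combination hc)
      rw [if_neg h]
      rw [psiF, if_neg hx1] at hx
      exact ⟨hx1, hx.2⟩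
  · intro y hy
    simp only [Finset.mem_coe, Finset.mem_filter, Finset.mem_univ, true_and] at hy
    simp only [Finset.mem_coe, Finset.mem_filter, Finset.mem_univ, true_and]
    by_cases h : y = 1
    · subst h
      rw [if_pos rfl]
      refine ⟨by simp, ?_⟩
      rw [psiF, if_pos (by ring : (-1 : F) + 1 = 0)]
      rw [S.clF_one] at hy
      exact hy.2.symm ▸ rfl
    · rw [if_neg h]
      have h1 : y - 1 + 1 = y := by ring
      refine ⟨fun hc => h (by linear_combination hc), ?_⟩
      rw [psiF, if_neg (by rw [h1]; exact hy.1), h1]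
      exact hy.2
  · intro x hx
    simp only [Finset.mem_coe, Finset.mem_filter, Finset.mem_univ, true_and] at hx
    by_cases h : x = -1
    · subst h; simp
    · beta_reduce
      rw [if_neg h, if_neg (fun hc : x + 1 = 1 => hx.1 (by linear_combination hc))]
      ring
  · intro y hy
    simp only [Finset.mem_coe, Finset.mem_filter, Finset.mem_univ, true_and] at hy
    by_cases h : y = 1
    · subst h; simp
    · beta_reduce
      rw [if_neg h, if_neg (fun hc : y - 1 = -1 => hy.1 (by linear_combination hc))]
      ring

lemma CBSetup.cross_bound (S : CBSetup N M f α dlog) (i j : ZMod M) (τ : ZMod N)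
    (hne : ¬(i = j ∧ τ = 0)) :
    (univ.filter fun t : ZMod N =>
      psiF M dlog (α ^ t.val) + i = psiF M dlog (α ^ (t + τ).val) + j).card ≤ f + 2 := by
  have hm1 : (-1 : F) ≠ 0 := by simp
  have hs0 : α ^ (dlog (-1)).val = -1 := S.hdlog _ hm1
  set s0 := dlog (-1) with hs0def
  set T3 := univ.filter (fun t : ZMod N => α ^ t.val + 1 ≠ 0 ∧ α ^ (t + τ).val + 1 ≠ 0 ∧
      clF M dlog (α ^ t.val + 1) + i = clF M dlog (α ^ (t + τ).val + 1) + j) with hT3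
  have hsub : (univ.filter fun t : ZMod N =>
      psiF M dlog (α ^ t.val) + i = psiF M dlog (α ^ (t + τ).val) + j)
      ⊆ insert s0 (insert (s0 - τ) T3) := by
    intro t ht
    simp only [Finset.mem_filter, Finset.mem_univ, true_and] at ht
    by_cases h1 : α ^ t.val + 1 = 0
    · have h3 : t = s0 := S.einj _ _ (by rw [hs0]; linear_combination h1)
      rw [h3]
      exact Finset.mem_insert_self _ _
    by_cases h2 : α ^ (t + τ).val + 1 = 0
    · have h3 : t + τ = s0 := S.einj _ _ (by rw [hs0]; linear_combination h2)
      have : t = s0 - τ := by rw [← h3]; ring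
      rw [this]
      exact Finset.mem_insert_of_mem (Finset.mem_insert_self _ _)
    · apply Finset.mem_insert_of_mem
      apply Finset.mem_insert_of_mem
      rw [hT3]
      simp only [Finset.mem_filter, Finset.mem_univ, true_and]
      rw [psiF, psiF, if_neg h1, if_neg h2] at ht
      exact ⟨h1, h2, ht⟩
  have hc1 : (univ.filter fun t : ZMod N =>
      psiF M dlog (α ^ t.val) + i = psiF M dlog (α ^ (t + τ).val) + j).card
      ≤ T3.card + 2 := by
    calc _ ≤ (insert s0 (insert (s0 - τ) T3)).card := Finset.card_le_card hsub
    _ ≤ (insert (s0 - τ) T3).card + 1 := Finset.card_insert_le _ _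
    _ ≤ T3.card + 1 + 1 := by
        have := Finset.card_insert_le (s0 - τ) T3; omega
  have hc2 : T3.card ≤ f := by
    rw [← S.card_clF_fiber (j - i)]
    apply Finset.card_le_card_of_injOn
        (fun t => (α ^ t.val + 1) * (α ^ (t + τ).val + 1)⁻¹)
    · intro t ht
      rw [hT3] at ht
      simp only [Finset.mem_coe, Finset.mem_filter, Finset.mem_univ, true_and] at ht ⊢
      refine ⟨mul_ne_zero ht.1 (inv_ne_zero ht.2.1), ?_⟩
      rw [S.clF_mul ht.1 (inv_ne_zero ht.2.1), S.clF_inv ht.2.1]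
      linear_combination ht.2.2
    · intro t ht t' ht' hg
      dsimp only at hg
      simp only [hT3, Finset.coe_filter, Set.mem_setOf_eq, Finset.mem_univ, true_and] at ht ht'
      obtain ⟨ha1, ha2, ha3⟩ := ht
      obtain ⟨hb1, hb2, hb3⟩ := ht'
      have hyt : α ^ (t + τ).val = α ^ t.val * α ^ τ.val := S.pow_val_add t τ
      have hyt' : α ^ (t' + τ).val = α ^ t'.val * α ^ τ.val := S.pow_val_add t' τ
      have e1 : ∀ a y c : F, y ≠ 0 → a * y⁻¹ * (y * c) = a * c := by
        intro a y c hy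
        rw [mul_assoc, ← mul_assoc y⁻¹, inv_mul_cancel₀ hy, one_mul]
      have hg2 : (α ^ t.val + 1) * (α ^ (t' + τ).val + 1)
          = (α ^ t'.val + 1) * (α ^ (t + τ).val + 1) := by
        calc (α ^ t.val + 1) * (α ^ (t' + τ).val + 1)
            = (α ^ t.val + 1) * (α ^ (t + τ).val + 1)⁻¹ *
              ((α ^ (t + τ).val + 1) * (α ^ (t' + τ).val + 1)) := (e1 _ _ _ ha2).symm
          _ = (α ^ t'.val + 1) * (α ^ (t' + τ).val + 1)⁻¹ *
              ((α ^ (t + τ).val + 1) * (α ^ (t' + τ).val + 1)) := by rw [hg]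
          _ = (α ^ t'.val + 1) * (α ^ (t' + τ).val + 1)⁻¹ *
              ((α ^ (t' + τ).val + 1) * (α ^ (t + τ).val + 1)) := by ring
          _ = (α ^ t'.val + 1) * (α ^ (t + τ).val + 1) := e1 _ _ _ hb2
      have hkey : (α ^ t.val - α ^ t'.val) * (1 - α ^ τ.val) = 0 := by
        rw [hyt, hyt'] at hg2
        linear_combination hg2
      rcases mul_eq_zero.1 hkey with h | h
      · exact S.einj t t' (by linear_combination h)
      · exfalso
        have hτ : τ = 0 := by
          apply S.einj
          rw [ZMod.val_zero, pow_zero]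
          linear_combination -h
        have hij : i = j := by
          rw [hτ, add_zero] at ha3
          exact add_left_cancel ha3
        exact hne ⟨hij, hτ⟩
  omega

end Aux


section SumLemmas
variable {N : ℕ} [NeZero N] {G : Type*} [DecidableEq G]

lemma sum_Hcorr_of_countFreq (X Y : ZMod N → G) (c : ℕ) (hY : ∀ a, countFreq Y a = c) :
    ∑ τ : ZMod N, Hcorr X Y τ = N * c := by
  have key : ∀ t : ZMod N, (∑ τ : ZMod N, if X t = Y (t + τ) then 1 else 0) = c := by
    intro t
    rw [← hY (X t), countFreq, Finset.card_filter]
    exact Fintype.sum_equiv (Equiv.addLeft t) _ _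
      (fun τ => by simp only [Equiv.coe_addLeft]; exact if_congr eq_comm rfl rfl)
  calc ∑ τ : ZMod N, Hcorr X Y τ
      = ∑ τ : ZMod N, ∑ t : ZMod N, if X t = Y (t + τ) then 1 else 0 := by
        simp only [Hcorr, Finset.card_filter]
    _ = ∑ t : ZMod N, ∑ τ : ZMod N, if X t = Y (t + τ) then 1 else 0 := Finset.sum_comm
    _ = ∑ _t : ZMod N, c := Finset.sum_congr rfl (fun t _ => key t)
    _ = N * c := by rw [Finset.sum_const, Finset.card_univ, ZMod.card, smul_eq_mul]

lemma Hcorr_self_zero (X : ZMod N → G) : Hcorr X X 0 = N := by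
  simp [Hcorr, ZMod.card]

end SumLemmas

/-- Theorem 13 (Construction B): optimal AHC and `H(U) ≤ f + 2`. -/
theorem constructionB (q M f : ℕ) [NeZero (q - 1)] (hM : 2 ≤ M) (hf : 1 ≤ f)
    (hq : q = M * f + 1) (hpp : IsPrimePow q)
    {F : Type*} [Field F] [Fintype F] [DecidableEq F] (hcard : Fintype.card F = q)
    (α : F) (hα : ∀ x : F, x ≠ 0 → ∃ k : ℕ, α ^ k = x)
    (U : Fin M → ZMod (q - 1) → ZMod M)
    (hU0 : ∀ (i : Fin M) (t : ZMod (q - 1)), α ^ t.val + 1 = 0 → U i t = ((i : ℕ) : ZMod M))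
    (hUC : ∀ (i : Fin M) (t : ZMod (q - 1)) (r : ℕ), r < M →
      α ^ t.val + 1 ∈ cycClass α M f r → U i t = (r : ZMod M) + ((i : ℕ) : ZMod M)) :
    (Aa U / (((q : ℚ) - 1) * ((M : ℚ) - 1)) + Ac U / ((q : ℚ) - 2)
      = (((q : ℚ) - 1) * (M : ℚ) - (M : ℚ)) / ((M : ℚ) * ((q : ℚ) - 2) * ((M : ℚ) - 1))) ∧
    (∀ (i : Fin M) (τ : ZMod (q - 1)), τ ≠ 0 → Hcorr (U i) (U i) τ ≤ f + 2) ∧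
    (∀ (i j : Fin M), i ≠ j → ∀ τ : ZMod (q - 1), Hcorr (U i) (U j) τ ≤ f + 2) := by
  classical
  -- arithmetic preliminaries
  have hMf : 2 ≤ M * f := le_trans hM (Nat.le_mul_of_pos_right M (by omega))
  have hq3 : 3 ≤ q := by omega
  have hq1 : q - 1 = M * f := by omega
  haveI : NeZero M := ⟨by omega⟩
  -- α is nonzero
  have hα0 : α ≠ 0 := by
    have h2 : 1 < (Finset.univ.filter (fun x : F => x ≠ 0)).card := by
      have h3 := Finset.card_filter_add_card_filter_not
        (s := (Finset.univ : Finset F)) (p := fun x : F => x ≠ 0)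
      have h4 : (Finset.univ.filter (fun x : F => ¬ x ≠ 0)).card ≤ 1 := by
        have hsub : (Finset.univ.filter (fun x : F => ¬ x ≠ 0)) ⊆ {0} := by
          intro y hy
          simp only [Finset.mem_filter, not_not] at hy
          simp [hy.2]
        exact le_trans (Finset.card_le_card hsub) (by simp)
      have h5 : (Finset.univ : Finset F).card = q := by rw [Finset.card_univ, hcard]
      omega
    obtain ⟨x, hxmem, hx1⟩ := Finset.exists_mem_ne h2 1
    have hx0 : x ≠ 0 := (Finset.mem_filter.1 hxmem).2
    intro hα0
    obtain ⟨k, hk⟩ := hα x hx0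
    rcases k with _ | k
    · rw [pow_zero] at hk; exact hx1 hk.symm
    · rw [hα0, zero_pow (Nat.succ_ne_zero k)] at hk; exact hx0 hk.symm
  have hαN : α ^ (q - 1) = 1 := by
    have h := FiniteField.pow_card_sub_one_eq_one α hα0
    rwa [hcard] at h
  -- discrete logarithm
  have hsurj : ∀ x : F, ∃ t : ZMod (q - 1), x ≠ 0 → α ^ t.val = x := by
    intro x
    by_cases hx : x = 0
    · exact ⟨0, fun h => absurd hx h⟩
    · obtain ⟨k, hk⟩ := hα x hx
      refine ⟨(k : ZMod (q - 1)), fun _ => ?_⟩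
      rw [ZMod.val_natCast, ← pow_eq_pow_mod _ hαN, hk]
  choose dlog hdlog using hsurj
  -- injectivity of the exponential map
  have hbij : Function.Bijective
      (fun t : ZMod (q - 1) => (⟨α ^ t.val, pow_ne_zero _ hα0⟩ : {x : F // x ≠ 0})) := by
    rw [Fintype.bijective_iff_surjective_and_card]
    constructor
    · rintro ⟨x, hx⟩
      exact ⟨dlog x, Subtype.ext (hdlog x hx)⟩
    · rw [ZMod.card, Fintype.card_subtype_compl, Fintype.card_subtype_eq, hcard]
  have einj : ∀ s t : ZMod (q - 1), α ^ s.val = α ^ t.val → s = t := by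
    intro s t h
    exact hbij.1 (Subtype.ext h)
  have S : CBSetup (q - 1) M f α dlog := ⟨hα0, hαN, einj, hdlog, hq1, hM, hf⟩
  -- the sequences are shifts of ψ
  have hU : ∀ (i : Fin M) (t : ZMod (q - 1)),
      U i t = psiF M dlog (α ^ t.val) + ((i : ℕ) : ZMod M) := by
    intro i t
    by_cases h0 : α ^ t.val + 1 = 0
    · rw [hU0 i t h0, psiF, if_pos h0, zero_add]
    · have hr : (clF M dlog (α ^ t.val + 1)).val < M := ZMod.val_lt _
      have hmem : α ^ t.val + 1 ∈ cycClass α M f (clF M dlog (α ^ t.val + 1)).val :=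
        (S.mem_cycClass hr).2 ⟨h0, by rw [ZMod.natCast_val, ZMod.cast_id]⟩
      rw [hUC i t _ hr hmem, psiF, if_neg h0, ZMod.natCast_val, ZMod.cast_id]
  -- frequency counts
  have hfreq : ∀ (i : Fin M) (a : ZMod M), countFreq (U i) a = f := by
    intro i a
    rw [countFreq]
    have hfc : Finset.univ.filter (fun t : ZMod (q - 1) => U i t = a)
        = Finset.univ.filter (fun t : ZMod (q - 1) =>
            psiF M dlog (α ^ t.val) = a - ((i : ℕ) : ZMod M)) := by
      apply Finset.filter_congr
      intro t _
      rw [hU i t]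
      constructor
      · intro h; linear_combination h
      · intro h; linear_combination h
    rw [hfc, S.card_exp_fiber (fun x => psiF M dlog x = a - ((i : ℕ) : ZMod M)),
      S.card_psi_fiber]
  -- total correlation sums
  have hsum : ∀ i j : Fin M, ∑ τ : ZMod (q - 1), Hcorr (U i) (U j) τ = (q - 1) * f :=
    fun i j => sum_Hcorr_of_countFreq (U i) (U j) f (hfreq j)
  have hSa : Sa U = M * ((q - 1) * f - (q - 1)) := by
    rw [Sa]
    have hterm : ∀ i : Fin M,
        ∑ τ ∈ Finset.univ \ {(0 : ZMod (q - 1))}, Hcorr (U i) (U i) τ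
          = (q - 1) * f - (q - 1) := by
      intro i
      have hss := Finset.sum_sdiff (f := Hcorr (U i) (U i))
        (Finset.singleton_subset_iff.2 (Finset.mem_univ (0 : ZMod (q - 1))))
      rw [Finset.sum_singleton, hsum i i, Hcorr_self_zero] at hss
      omega
    rw [Finset.sum_congr rfl (fun i _ => hterm i), Finset.sum_const, Finset.card_univ,
      Fintype.card_fin, smul_eq_mul]
  have hSc : Sc U = M * ((M - 1) * ((q - 1) * f)) := by
    rw [Sc]
    have hterm : ∀ i : Fin M,
        ∑ j ∈ Finset.univ \ {i}, ∑ τ : ZMod (q - 1), Hcorr (U i) (U j) τ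
          = (M - 1) * ((q - 1) * f) := by
      intro i
      rw [Finset.sum_congr rfl (fun j _ => hsum i j), Finset.sum_const, smul_eq_mul]
      congr 1
      rw [Finset.card_sdiff_of_subset (Finset.singleton_subset_iff.2 (Finset.mem_univ i)),
        Finset.card_univ, Fintype.card_fin, Finset.card_singleton]
    rw [Finset.sum_congr rfl (fun i _ => hterm i), Finset.sum_const, Finset.card_univ,
      Fintype.card_fin, smul_eq_mul]
  -- casts of Fin indices are distinct in ZMod M
  have hFin : ∀ i j : Fin M, ((i : ℕ) : ZMod M) = ((j : ℕ) : ZMod M) → i = j := by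
    intro i j h
    apply Fin.ext
    have h2 := congrArg ZMod.val h
    rwa [ZMod.val_cast_of_lt i.isLt, ZMod.val_cast_of_lt j.isLt] at h2
  refine ⟨?_, ?_, ?_⟩
  · -- the AHC identity
    have hle : (q - 1) ≤ (q - 1) * f := Nat.le_mul_of_pos_right _ (by omega)
    have hQ : ((q : ℚ)) = (M : ℚ) * (f : ℚ) + 1 := by exact_mod_cast hq
    have hcast1 : ((q - 1 : ℕ) : ℚ) = (q : ℚ) - 1 := by
      have : 1 ≤ q := by omega
      push_cast [this]
      ring
    have hM0 : (M : ℚ) ≠ 0 := by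
      have : (2 : ℚ) ≤ (M : ℚ) := by exact_mod_cast hM
      linarith
    have hM1 : (M : ℚ) - 1 ≠ 0 := by
      have : (2 : ℚ) ≤ (M : ℚ) := by exact_mod_cast hM
      linarith
    have hMf2 : (2 : ℚ) ≤ (M : ℚ) * (f : ℚ) := by exact_mod_cast hMf
    have hd1 : (M : ℚ) * (f : ℚ) ≠ 0 := by linarith
    have hd2 : (M : ℚ) * (f : ℚ) - 1 ≠ 0 := by linarith
    rw [Aa, Ac, hSa, hSc]
    push_cast [Nat.cast_sub hle, hcast1, Nat.cast_sub (by omega : 1 ≤ M)]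
    rw [hQ]
    have e1 : (M : ℚ) * (f : ℚ) + 1 - 1 = (M : ℚ) * (f : ℚ) := by ring
    have e2 : (M : ℚ) * (f : ℚ) + 1 - 2 = (M : ℚ) * (f : ℚ) - 1 := by ring
    rw [e1, e2]
    field_simp
    ring
  · -- autocorrelation bound
    intro i τ hτ
    have hfc : Finset.univ.filter (fun t : ZMod (q - 1) => U i t = U i (t + τ))
        = Finset.univ.filter (fun t : ZMod (q - 1) =>
            psiF M dlog (α ^ t.val) + ((i : ℕ) : ZMod M)
              = psiF M dlog (α ^ (t + τ).val) + ((i : ℕ) : ZMod M)) :=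
      Finset.filter_congr (fun t _ => by rw [hU i t, hU i (t + τ)])
    rw [Hcorr, hfc]
    exact S.cross_bound _ _ τ (fun h => hτ h.2)
  · -- crosscorrelation bound
    intro i j hij τ
    have hfc : Finset.univ.filter (fun t : ZMod (q - 1) => U i t = U j (t + τ))
        = Finset.univ.filter (fun t : ZMod (q - 1) =>
            psiF M dlog (α ^ t.val) + ((i : ℕ) : ZMod M)
              = psiF M dlog (α ^ (t + τ).val) + ((j : ℕ) : ZMod M)) :=
      Finset.filter_congr (fun t _ => by rw [hU i t, hU j (t + τ)])
    rw [Hcorr, hfc]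
    exact S.cross_bound _ _ τ (fun h => hij (hFin i j h.1))
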